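/- Assume r0 : [0,π] → ℝ satisfies (H2). Then for any reals 0 ≤ α < β ≤ 1 there exists a constant C > 0 such that for every integer n ≥ 1 and all φ ≠ ϕ in (0,π): |H_n(φ,ϕ)| ≤ C · n^{−α} · sin ϕ · r0(ϕ)^{1/2} · r0(φ)^{−3/2} · |φ − ϕ|^{−β}. -/

import Mathlib

open Real Set

/-- The Gauss hypergeometric function `F(a,b;c;x) = Σₖ (a)ₖ(b)ₖ/((c)ₖ k!) xᵏ`. -/
noncomputable def hyp (a b c x : ℝ) : ℝ :=
  ∑' k : ℕ, ((ascPochhammer ℝ k).eval a * (ascPochhammer ℝ k).eval b /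
    ((ascPochhammer ℝ k).eval c * (Nat.factorial k : ℝ))) * x ^ k

/-- `R(φ,ϕ) = (r0(φ)+r0(ϕ))² + (cos φ − cos ϕ)²`. -/
noncomputable def Rker (r0 : ℝ → ℝ) (φ ϕ : ℝ) : ℝ :=
  (r0 φ + r0 ϕ) ^ 2 + (Real.cos φ - Real.cos ϕ) ^ 2

/-- `H_n(φ,ϕ) = (2^{2n−1}((1/2)ₙ)²/(2n)!) sin ϕ · r0(φ)^{n−1} r0(ϕ)^{n+1} R(φ,ϕ)^{−(n+1/2)}
· F(n+1/2,n+1/2;2n+1; 4 r0(φ) r0(ϕ)/R(φ,ϕ))`. -/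
noncomputable def Hker (r0 : ℝ → ℝ) (n : ℕ) (φ ϕ : ℝ) : ℝ :=
  (2:ℝ) ^ (2 * n - 1) * ((ascPochhammer ℝ n).eval (1 / 2 : ℝ)) ^ 2 / (Nat.factorial (2 * n) : ℝ) *
    (Real.sin ϕ * r0 φ ^ (n - 1) * r0 ϕ ^ (n + 1) / Rker r0 φ ϕ ^ ((n : ℝ) + 1 / 2)) *
    hyp ((n : ℝ) + 1 / 2) ((n : ℝ) + 1 / 2) (2 * (n : ℝ) + 1) (4 * r0 φ * r0 ϕ / Rker r0 φ ϕ)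

lemma poch_pos {x : ℝ} (hx : 0 < x) (k : ℕ) : 0 < (ascPochhammer ℝ k).eval x := by
  induction k with
  | zero => simp
  | succ m ih =>
    rw [ascPochhammer_succ_eval]
    exact mul_pos ih (by positivity)

lemma poch_succ_left (k : ℕ) (x : ℝ) :
    (ascPochhammer ℝ (k+1)).eval x = x * (ascPochhammer ℝ k).eval (x+1) := by
  rw [ascPochhammer_succ_left, Polynomial.eval_mul]
  simp [Polynomial.eval_comp]

lemma taylor_bound : ∀ (N : ℕ) (a u : ℝ), 0 < a → 0 ≤ u → u < 1 →
    ∑ k ∈ Finset.range N, (ascPochhammer ℝ k).eval a * u ^ k / (Nat.factorial k : ℝ)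
      ≤ (1 - u) ^ (-a) := by
  intro N
  induction N with
  | zero =>
    intro a u ha hu0 hu1
    simp only [Finset.range_zero, Finset.sum_empty]
    exact Real.rpow_nonneg (by linarith) _
  | succ N ih =>
    intro a u ha hu0 hu1
    set h : ℝ → ℝ := fun v => (1 - v) ^ (-a) -
      ∑ k ∈ Finset.range (N+1), (ascPochhammer ℝ k).eval a / (Nat.factorial k : ℝ) * v ^ k with hh
    set D : ℝ → ℝ := fun v => a * ((1 - v) ^ (-(a+1)) -
      ∑ j ∈ Finset.range N, (ascPochhammer ℝ j).eval (a+1) * v ^ j / (Nat.factorial j : ℝ))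
      with hD
    have hsub : ∀ v ∈ Set.uIcc (0:ℝ) u, 1 - v > 0 := by
      intro v hv
      rw [Set.uIcc_of_le hu0] at hv
      have := hv.2
      linarith [hu1]
    have hderiv : ∀ v ∈ Set.uIcc (0:ℝ) u, HasDerivAt h (D v) v := by
      intro v hv
      have h1v := hsub v hv
      have d1 : HasDerivAt (fun v : ℝ => (1 - v) ^ (-a)) (a * (1 - v) ^ (-(a+1))) v := by
        have := ((hasDerivAt_id v).const_sub 1).rpow_const (p := -a) (Or.inl (ne_of_gt h1v))
        simp only [id] at this
        convert this using 1
        rw [show -(a+1) = -a - 1 by ring]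
        ring
      have d2 : HasDerivAt (fun v : ℝ => ∑ k ∈ Finset.range (N+1),
          (ascPochhammer ℝ k).eval a / (Nat.factorial k : ℝ) * v ^ k)
          (∑ k ∈ Finset.range (N+1),
            (ascPochhammer ℝ k).eval a / (Nat.factorial k : ℝ) * (k * v ^ (k-1))) v := by
        exact HasDerivAt.fun_sum fun k _ =>
          (hasDerivAt_pow k v).const_mul ((ascPochhammer ℝ k).eval a / (Nat.factorial k : ℝ))
      have hsum : ∑ k ∈ Finset.range (N+1),
          (ascPochhammer ℝ k).eval a / (Nat.factorial k : ℝ) * (k * v ^ (k-1))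
          = a * ∑ j ∈ Finset.range N,
            (ascPochhammer ℝ j).eval (a+1) * v ^ j / (Nat.factorial j : ℝ) := by
        rw [Finset.sum_range_succ', Finset.mul_sum]
        simp only [Nat.cast_zero, pow_zero, zero_mul, mul_zero, add_zero, Nat.cast_ofNat]
        refine Finset.sum_congr rfl fun i _ => ?_
        rw [poch_succ_left, Nat.factorial_succ]
        have hfi : (Nat.factorial i : ℝ) ≠ 0 := Nat.cast_ne_zero.2 (Nat.factorial_ne_zero i)
        have hi1 : ((i:ℝ) + 1) ≠ 0 := by positivity
        push_cast
        field_simp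
      have := d1.fun_sub d2
      rw [hsum] at this
      refine this.congr_deriv ?_
      simp only [hD]
      ring
    have hDcont : ContinuousOn D (Set.uIcc (0:ℝ) u) := by
      apply ContinuousOn.mul continuousOn_const
      apply ContinuousOn.sub
      · apply ContinuousOn.rpow_const
        · exact (continuous_const.sub continuous_id).continuousOn
        · intro v hv; exact Or.inl (ne_of_gt (hsub v hv))
      · exact (Continuous.continuousOn (by continuity))
    have hint : IntervalIntegrable D MeasureTheory.volume 0 u :=
      hDcont.intervalIntegrable
    have hftc := intervalIntegral.integral_eq_sub_of_hasDerivAt hderiv hint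
    have hDnn : 0 ≤ ∫ v in (0:ℝ)..u, D v := by
      apply intervalIntegral.integral_nonneg hu0
      intro v hv
      have hv0 : 0 ≤ v := hv.1
      have hv1 : v < 1 := lt_of_le_of_lt hv.2 hu1
      have := ih (a+1) v (by linarith) hv0 hv1
      simp only [hD]
      have : 0 ≤ (1 - v) ^ (-(a+1)) -
          ∑ j ∈ Finset.range N, (ascPochhammer ℝ j).eval (a+1) * v ^ j / (Nat.factorial j : ℝ) :=
        sub_nonneg.2 this
      positivity
    have h0 : h 0 = 0 := by
      simp only [hh, sub_zero, Real.one_rpow]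
      rw [Finset.sum_eq_single_of_mem 0 (Finset.mem_range.2 (Nat.succ_pos N))
        (fun b _ hb => by simp [zero_pow hb])]
      simp
    have hu : 0 ≤ h u := by
      rw [hftc, h0, sub_zero] at hDnn
      exact hDnn
    have : ∑ k ∈ Finset.range (N+1),
        (ascPochhammer ℝ k).eval a / (Nat.factorial k : ℝ) * u ^ k ≤ (1 - u) ^ (-a) := by
      simp only [hh] at hu
      linarith
    calc ∑ k ∈ Finset.range (N+1), (ascPochhammer ℝ k).eval a * u ^ k / (Nat.factorial k : ℝ)
        = ∑ k ∈ Finset.range (N+1),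
          (ascPochhammer ℝ k).eval a / (Nat.factorial k : ℝ) * u ^ k := by
          refine Finset.sum_congr rfl fun k _ => by ring
      _ ≤ (1 - u) ^ (-a) := this


lemma rpow_succ' {b : ℝ} (hb : 0 ≤ b) {p : ℝ} (hp : 0 < p) : b ^ (p + 1) = b ^ p * b := by
  rcases eq_or_lt_of_le hb with h | h
  · rw [← h, Real.zero_rpow (by positivity : p + 1 ≠ 0), Real.zero_rpow (ne_of_gt hp), zero_mul]
  · rw [Real.rpow_add_one (ne_of_gt h)]

lemma cont_rpow {q : ℝ} (hq : 0 < q) : Continuous fun t : ℝ => t ^ q :=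
  continuous_iff_continuousAt.2 fun x => Real.continuousAt_rpow_const x q (Or.inr hq.le)

lemma cont_one_sub_rpow {q : ℝ} (hq : 0 < q) : Continuous fun t : ℝ => (1 - t) ^ q :=
  (cont_rpow hq).comp (continuous_const.sub continuous_id)

noncomputable def Jin (p : ℝ) (k : ℕ) : ℝ :=
  ∫ t in (0:ℝ)..1, t ^ (p + k) * (1 - t) ^ p

lemma Jin_integrand_cont {p : ℝ} (hp : 0 < p) (k : ℕ) :
    Continuous fun t : ℝ => t ^ (p + (k:ℝ)) * (1 - t) ^ p :=
  (cont_rpow (by positivity)).mul (cont_one_sub_rpow hp)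

lemma Jin_pos {p : ℝ} (hp : 0 < p) (k : ℕ) : 0 < Jin p k := by
  apply intervalIntegral.intervalIntegral_pos_of_pos_on
  · exact (Jin_integrand_cont hp k).intervalIntegrable 0 1
  · intro t ht
    have h1 : 0 < t := ht.1
    have h2 : 0 < 1 - t := by linarith [ht.2]
    positivity
  · norm_num

lemma Jin_nonneg {p : ℝ} (hp : 0 < p) (k : ℕ) : 0 ≤ Jin p k := (Jin_pos hp k).le

lemma Jin_rec {p : ℝ} (hp : (1:ℝ)/2 ≤ p) (k : ℕ) :
    (2*p + k + 2) * Jin p (k+1) = (p + k + 1) * Jin p k := by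
  have hp0 : 0 < p := by linarith
  set q : ℝ := p + k with hq
  have hq0 : 0 < q := by positivity
  -- FTC for F t = t^(q+1) * (1-t)^(p+1)
  have hderiv : ∀ t ∈ Set.uIcc (0:ℝ) 1,
      HasDerivAt (fun t : ℝ => t ^ (q+1) * (1 - t) ^ (p+1))
        ((q+1) * t ^ q * (1 - t) ^ (p+1) - (p+1) * t ^ (q+1) * (1 - t) ^ p) t := by
    intro t ht
    have d1 : HasDerivAt (fun t : ℝ => t ^ (q+1)) ((q+1) * t ^ q) t := by
      have := Real.hasDerivAt_rpow_const (x := t) (p := q+1) (Or.inr (by linarith))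
      simpa [show q + 1 - 1 = q by ring] using this
    have d2 : HasDerivAt (fun t : ℝ => (1 - t) ^ (p+1)) (-((p+1) * (1 - t) ^ p)) t := by
      have := ((hasDerivAt_id t).const_sub 1).rpow_const (p := p+1) (Or.inr (by linarith))
      simp only [id] at this
      convert this using 1
      rw [show p + 1 - 1 = p by ring]
      ring
    have := d1.fun_mul d2
    refine this.congr_deriv ?_
    ring
  have hint : IntervalIntegrable
      (fun t : ℝ => (q+1) * t ^ q * (1 - t) ^ (p+1) - (p+1) * t ^ (q+1) * (1 - t) ^ p)
      MeasureTheory.volume 0 1 := by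
    apply Continuous.intervalIntegrable
    exact ((continuous_const.mul (cont_rpow hq0)).mul (cont_one_sub_rpow (by linarith))).sub
      ((continuous_const.mul (cont_rpow (by linarith))).mul (cont_one_sub_rpow hp0))
  have hftc := intervalIntegral.integral_eq_sub_of_hasDerivAt hderiv hint
  have hbv : (1:ℝ) ^ (q+1) * (1 - 1:ℝ) ^ (p+1) - (0:ℝ) ^ (q+1) * (1 - 0:ℝ) ^ (p+1) = 0 := by
    rw [sub_self, Real.zero_rpow (by positivity : p + 1 ≠ 0),
      Real.zero_rpow (by positivity : q + 1 ≠ 0)]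
    ring
  rw [hbv] at hftc
  -- split the integral
  have hi1 : IntervalIntegrable (fun t : ℝ => t ^ q * (1 - t) ^ (p+1)) MeasureTheory.volume 0 1 :=
    ((cont_rpow hq0).mul (cont_one_sub_rpow (by linarith))).intervalIntegrable 0 1
  have hi2 : IntervalIntegrable (fun t : ℝ => t ^ (q+1) * (1 - t) ^ p) MeasureTheory.volume 0 1 :=
    ((cont_rpow (by linarith)).mul (cont_one_sub_rpow hp0)).intervalIntegrable 0 1
  have hsplit : (∫ t in (0:ℝ)..1, ((q+1) * t ^ q * (1 - t) ^ (p+1) - (p+1) * t ^ (q+1) * (1 - t) ^ p))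
      = (q+1) * (∫ t in (0:ℝ)..1, t ^ q * (1 - t) ^ (p+1))
        - (p+1) * (∫ t in (0:ℝ)..1, t ^ (q+1) * (1 - t) ^ p) := by
    rw [← intervalIntegral.integral_const_mul, ← intervalIntegral.integral_const_mul,
      ← intervalIntegral.integral_sub (hi1.const_mul _) (hi2.const_mul _)]
    congr 1
    ext t
    ring
  -- ∫ t^q (1-t)^{p+1} = Jin p k - Jin p (k+1)
  have hcast : q + 1 = p + ((k+1:ℕ):ℝ) := by push_cast; ring
  have hmid : (∫ t in (0:ℝ)..1, t ^ q * (1 - t) ^ (p+1))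
      = Jin p k - Jin p (k+1) := by
    have hcongr : Set.EqOn (fun t : ℝ => t ^ q * (1 - t) ^ (p+1))
        (fun t : ℝ => t ^ (p + (k:ℝ)) * (1 - t) ^ p - t ^ (p + ((k+1:ℕ):ℝ)) * (1 - t) ^ p)
        (Set.uIcc (0:ℝ) 1) := by
      intro t ht
      rw [Set.uIcc_of_le (by norm_num : (0:ℝ) ≤ 1)] at ht
      have ht0 : 0 ≤ t := ht.1
      have ht1 : 0 ≤ 1 - t := by linarith [ht.2]
      have e1 : (1 - t) ^ (p+1) = (1 - t) ^ p * (1 - t) := rpow_succ' ht1 hp0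
      have e2 : t ^ (p + ((k+1:ℕ):ℝ)) = t ^ (p + (k:ℝ)) * t := by
        rw [show p + ((k+1:ℕ):ℝ) = (p + (k:ℝ)) + 1 by push_cast; ring]
        exact rpow_succ' ht0 (by positivity)
      simp only [hq, e1, e2]
      ring
    rw [intervalIntegral.integral_congr hcongr,
      intervalIntegral.integral_sub ((Jin_integrand_cont hp0 k).intervalIntegrable 0 1)
        ((Jin_integrand_cont hp0 (k+1)).intervalIntegrable 0 1)]
    rfl
  have hlast : (∫ t in (0:ℝ)..1, t ^ (q+1) * (1 - t) ^ p) = Jin p (k+1) := by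
    have hcongr : Set.EqOn (fun t : ℝ => t ^ (q+1) * (1 - t) ^ p)
        (fun t : ℝ => t ^ (p + ((k+1:ℕ):ℝ)) * (1 - t) ^ p) (Set.uIcc (0:ℝ) 1) := by
      intro t _
      simp only [hcast]
    rw [intervalIntegral.integral_congr hcongr]
    rfl
  rw [hsplit, hmid, hlast] at hftc
  rw [hq] at hftc
  linear_combination -hftc

lemma Jin_formula {p : ℝ} (hp : (1:ℝ)/2 ≤ p) (k : ℕ) :
    Jin p k * (ascPochhammer ℝ k).eval (2*p+2) = Jin p 0 * (ascPochhammer ℝ k).eval (p+1) := by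
  induction k with
  | zero => simp
  | succ m ih =>
    have hrec := Jin_rec hp m
    rw [ascPochhammer_succ_eval, ascPochhammer_succ_eval]
    have : Jin p (m+1) * ((ascPochhammer ℝ m).eval (2*p+2) * (2*p+2+m))
        = (Jin p (m+1) * (2*p + m + 2)) * (ascPochhammer ℝ m).eval (2*p+2) := by ring
    rw [this, show Jin p (m+1) * (2*p + m + 2) = (p + m + 1) * Jin p m by linarith [hrec]]
    calc (p + m + 1) * Jin p m * (ascPochhammer ℝ m).eval (2*p+2)
        = (p + m + 1) * (Jin p m * (ascPochhammer ℝ m).eval (2*p+2)) := by ring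
      _ = (p + m + 1) * (Jin p 0 * (ascPochhammer ℝ m).eval (p+1)) := by rw [ih]
      _ = Jin p 0 * ((ascPochhammer ℝ m).eval (p+1) * (p + 1 + m)) := by ring

noncomputable def Bfn (n : ℕ) : ℝ := Jin ((n:ℝ) - 1/2) 0

lemma Bfn_pos {n : ℕ} (hn : 1 ≤ n) : 0 < Bfn n := by
  apply Jin_pos
  have : (1:ℝ) ≤ (n:ℝ) := by exact_mod_cast hn
  linarith

lemma Bfn_rec {n : ℕ} (hn : 1 ≤ n) :
    Bfn (n+1) = (2*(n:ℝ)+1)/(8*((n:ℝ)+1)) * Bfn n := by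
  have hn1 : (1:ℝ) ≤ (n:ℝ) := by exact_mod_cast hn
  set p : ℝ := (n:ℝ) - 1/2 with hpdef
  have hp : (1:ℝ)/2 ≤ p := by rw [hpdef]; linarith
  have hp0 : 0 < p := lt_of_lt_of_le (by norm_num) hp
  have h1 := Jin_rec hp 0
  have h2 := Jin_rec hp 1
  -- Bfn (n+1) = Jin p 1 - Jin p 2
  have key : Bfn (n+1) = Jin p 1 - Jin p 2 := by
    have hcongr : Set.EqOn (fun t : ℝ => t ^ (((n+1:ℕ):ℝ) - 1/2 + ((0:ℕ):ℝ)) * (1 - t) ^ (((n+1:ℕ):ℝ) - 1/2))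
        (fun t : ℝ => t ^ (p + ((1:ℕ):ℝ)) * (1 - t) ^ p - t ^ (p + ((2:ℕ):ℝ)) * (1 - t) ^ p)
        (Set.uIcc (0:ℝ) 1) := by
      intro t ht
      rw [Set.uIcc_of_le (by norm_num : (0:ℝ) ≤ 1)] at ht
      have ht0 : 0 ≤ t := ht.1
      have ht1 : 0 ≤ 1 - t := by linarith [ht.2]
      have e0 : ((n+1:ℕ):ℝ) - 1/2 + ((0:ℕ):ℝ) = p + 1 := by push_cast; simp only [hpdef]; ring
      have e0' : ((n+1:ℕ):ℝ) - 1/2 = p + 1 := by push_cast; simp only [hpdef]; ring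
      have e1 : (1 - t) ^ (p+1) = (1 - t) ^ p * (1 - t) := rpow_succ' ht1 hp0
      have e2 : t ^ (p + ((2:ℕ):ℝ)) = t ^ (p + ((1:ℕ):ℝ)) * t := by
        rw [show p + ((2:ℕ):ℝ) = (p + ((1:ℕ):ℝ)) + 1 by push_cast; ring]
        exact rpow_succ' ht0 (by positivity)
      simp only [e0, e0', e1, e2]
      push_cast
      ring
    have : Bfn (n+1) = ∫ t in (0:ℝ)..1,
        (t ^ (p + ((1:ℕ):ℝ)) * (1 - t) ^ p - t ^ (p + ((2:ℕ):ℝ)) * (1 - t) ^ p) := by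
      rw [Bfn, Jin, intervalIntegral.integral_congr hcongr]
    rw [this, intervalIntegral.integral_sub ((Jin_integrand_cont hp0 1).intervalIntegrable 0 1)
        ((Jin_integrand_cont hp0 2).intervalIntegrable 0 1)]
    rfl
  have hBn : Bfn n = Jin p 0 := by rw [Bfn]
  rw [key, hBn]
  push_cast at h1 h2
  have hd1 : (2*p + 2) ≠ 0 := ne_of_gt (by linarith)
  have hd2 : (2*p + 1 + 2) ≠ 0 := ne_of_gt (by linarith)
  have e1 : Jin p 1 = (p + 1)/(2*p+2) * Jin p 0 := by
    rw [div_mul_eq_mul_div, eq_div_iff hd1]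
    linarith [h1]
  have e2 : Jin p 2 = (p + 2)/(2*p+3) * Jin p 1 := by
    field_simp
    nlinarith [h2]
  rw [e2, e1]
  have hne : (8:ℝ)*((n:ℝ)+1) ≠ 0 := by positivity
  field_simp
  simp only [hpdef]
  ring

lemma quarter_rpow_half : ((1:ℝ)/4) ^ ((1:ℝ)/2) = 1/2 := by
  rw [show (1/4:ℝ) = ((1/2:ℝ))^(2:ℕ) by norm_num, ← Real.rpow_natCast ((1/2:ℝ)) 2,
    ← Real.rpow_mul (by norm_num)]
  norm_num

lemma Bfn_one_lb : (1:ℝ)/8 ≤ Bfn 1 := by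
  have hp : ((1:ℕ):ℝ) - 1/2 = 1/2 := by norm_num
  have hcont : Continuous fun t : ℝ => t ^ (((1:ℕ):ℝ) - 1/2 + ((0:ℕ):ℝ)) * (1 - t) ^ (((1:ℕ):ℝ) - 1/2) :=
    Jin_integrand_cont (by norm_num) 0
  set f : ℝ → ℝ := fun t => t ^ (((1:ℕ):ℝ) - 1/2 + ((0:ℕ):ℝ)) * (1 - t) ^ (((1:ℕ):ℝ) - 1/2) with hf
  have hsplit : Bfn 1 = (∫ t in (0:ℝ)..(1/4), f t) + ((∫ t in (1/4:ℝ)..(3/4), f t)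
      + (∫ t in (3/4:ℝ)..1, f t)) := by
    rw [Bfn, Jin]
    rw [intervalIntegral.integral_add_adjacent_intervals
      (hcont.intervalIntegrable _ _) (hcont.intervalIntegrable _ _),
      intervalIntegral.integral_add_adjacent_intervals
      (hcont.intervalIntegrable _ _) (hcont.intervalIntegrable _ _)]
  have hnn : ∀ a b : ℝ, a ≤ b → 0 ≤ a → b ≤ 1 → 0 ≤ ∫ t in a..b, f t := by
    intro a b hab ha hb
    apply intervalIntegral.integral_nonneg hab
    intro t ht
    have h0 : 0 ≤ t := le_trans ha ht.1
    have h1 : 0 ≤ 1 - t := by linarith [le_trans ht.2 hb]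
    exact mul_nonneg (Real.rpow_nonneg h0 _) (Real.rpow_nonneg h1 _)
  have hmid : (1:ℝ)/8 ≤ ∫ t in (1/4:ℝ)..(3/4), f t := by
    have hconst : (∫ _ in (1/4:ℝ)..(3/4), (1/4:ℝ)) = 1/8 := by
      rw [intervalIntegral.integral_const]
      norm_num
    rw [← hconst]
    apply intervalIntegral.integral_mono_on (by norm_num)
      (intervalIntegrable_const) (hcont.intervalIntegrable _ _)
    intro t ht
    have h1 : ((1:ℝ)/4) ^ ((1:ℝ)/2) ≤ t ^ ((1:ℝ)/2) :=
      Real.rpow_le_rpow (by norm_num) ht.1 (by norm_num)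
    have h2 : ((1:ℝ)/4) ^ ((1:ℝ)/2) ≤ (1 - t) ^ ((1:ℝ)/2) :=
      Real.rpow_le_rpow (by norm_num) (by linarith [ht.2]) (by norm_num)
    rw [quarter_rpow_half] at h1 h2
    have := mul_le_mul h1 h2 (by norm_num) (Real.rpow_nonneg (by linarith [ht.1]) _)
    simp only [hf]
    rw [show ((1:ℕ):ℝ) - 1/2 + ((0:ℕ):ℝ) = 1/2 by norm_num, show ((1:ℕ):ℝ) - 1/2 = 1/2 by norm_num]
    calc (1/4:ℝ) = (1/2) * (1/2) := by norm_num
      _ ≤ _ := this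
  rw [hsplit]
  have h1 := hnn 0 (1/4) (by norm_num) (by norm_num) (by norm_num)
  have h3 := hnn (3/4) 1 (by norm_num) (by norm_num) (by norm_num)
  linarith

lemma coeff_le_Bfn : ∀ n : ℕ, 1 ≤ n →
    (2:ℝ)^(2*n-1) * ((ascPochhammer ℝ n).eval (1/2:ℝ))^2 / (Nat.factorial (2*n) : ℝ) / 4^n
      ≤ Bfn n := by
  intro n hn
  induction n, hn using Nat.le_induction with
  | base =>
    have : (ascPochhammer ℝ 1).eval (1/2:ℝ) = 1/2 := by simp
    rw [this]
    norm_num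
    linarith [Bfn_one_lb]
  | succ n hn ih =>
    have hih := ih
    have hposB := Bfn_pos hn
    have hrec := Bfn_rec hn
    have hnR : (1:ℝ) ≤ (n:ℝ) := by exact_mod_cast hn
    -- ratio identity
    have hpow : (2:ℝ)^(2*(n+1)-1) = (2:ℝ)^(2*n-1) * 4 := by
      rw [show 2*(n+1)-1 = (2*n-1)+2 by omega, pow_add]
      norm_num
    have hpoch : (ascPochhammer ℝ (n+1)).eval (1/2:ℝ)
        = (ascPochhammer ℝ n).eval (1/2:ℝ) * (1/2 + n) := by
      rw [ascPochhammer_succ_eval]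
    have hfact : (Nat.factorial (2*(n+1)) : ℝ)
        = (2*(n:ℝ)+2) * ((2*(n:ℝ)+1) * (Nat.factorial (2*n) : ℝ)) := by
      rw [show 2*(n+1) = (2*n+1)+1 by omega, Nat.factorial_succ, show (2*n+1) = (2*n)+1 by omega,
        Nat.factorial_succ]
      push_cast
      ring
    have hfne : (Nat.factorial (2*n) : ℝ) ≠ 0 := Nat.cast_ne_zero.2 (Nat.factorial_ne_zero _)
    have hratio : (2:ℝ)^(2*(n+1)-1) * ((ascPochhammer ℝ (n+1)).eval (1/2:ℝ))^2
        / (Nat.factorial (2*(n+1)) : ℝ) / 4^(n+1)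
        = (2*(n:ℝ)+1)/(8*((n:ℝ)+1)) *
          ((2:ℝ)^(2*n-1) * ((ascPochhammer ℝ n).eval (1/2:ℝ))^2 / (Nat.factorial (2*n) : ℝ) / 4^n) := by
      rw [hpow, hpoch, hfact, pow_succ]
      have h4 : (4:ℝ)^n ≠ 0 := by positivity
      field_simp
      ring
    rw [hratio, hrec]
    apply mul_le_mul_of_nonneg_left hih
    positivity

noncomputable def CaI (a' : ℝ) : ℝ := ∫ t in (0:ℝ)..1, t ^ (-(1:ℝ)/2) * (1-t) ^ (a'/2 - 1)

lemma CaI_integrable {a' : ℝ} (ha : 0 < a') :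
    IntervalIntegrable (fun t : ℝ => t ^ (-(1:ℝ)/2) * (1-t) ^ (a'/2-1))
      MeasureTheory.volume 0 1 := by
  have h1 : IntervalIntegrable (fun t : ℝ => t ^ (-(1:ℝ)/2) * (1-t) ^ (a'/2-1))
      MeasureTheory.volume 0 (1/2) := by
    have hr : IntervalIntegrable (fun t : ℝ => t ^ (-(1:ℝ)/2)) MeasureTheory.volume 0 (1/2) :=
      intervalIntegral.intervalIntegrable_rpow' (by norm_num)
    apply hr.mul_continuousOn
    apply ContinuousOn.rpow_const (continuous_const.sub continuous_id).continuousOn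
    intro t ht
    rw [Set.uIcc_of_le (by norm_num : (0:ℝ) ≤ 1/2)] at ht
    refine Or.inl ?_
    simp only [Pi.sub_apply, id_eq]
    intro h
    have ht2 := ht.2
    linarith
  have h2 : IntervalIntegrable (fun t : ℝ => t ^ (-(1:ℝ)/2) * (1-t) ^ (a'/2-1))
      MeasureTheory.volume (1/2) 1 := by
    have hr : IntervalIntegrable (fun t : ℝ => t ^ (a'/2-1)) MeasureTheory.volume 0 (1/2) :=
      intervalIntegral.intervalIntegrable_rpow' (by linarith)
    have hr2 := (hr.comp_sub_left 1).symm
    norm_num at hr2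
    have hcg : ContinuousOn (fun t : ℝ => t ^ (-(1:ℝ)/2)) (Set.uIcc (1/2:ℝ) 1) := by
      apply ContinuousOn.rpow_const continuousOn_id
      intro t ht
      rw [Set.uIcc_of_le (by norm_num : (1:ℝ)/2 ≤ 1)] at ht
      refine Or.inl ?_
      simp only [id_eq]
      intro h
      have ht1 := ht.1
      linarith
    have hr3 := hr2.mul_continuousOn hcg
    apply hr3.congr
    intro t _
    dsimp only
    ring
  exact h1.trans h2

lemma CaI_nonneg {a' : ℝ} : 0 ≤ CaI a' := by
  apply intervalIntegral.integral_nonneg (by norm_num)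
  intro t ht
  exact mul_nonneg (Real.rpow_nonneg ht.1 _) (Real.rpow_nonneg (by linarith [ht.2]) _)

lemma key_alg {x t s : ℝ} (hx1 : x ≤ 1) (ht0 : 0 ≤ t) (ht1 : t ≤ 1)
    (hs0 : 0 ≤ s) (hs1 : s ≤ 1) (hsx : s^2 = 1 - x) :
    x * (t * (1-t)) ≤ (1 - s) * (1 - x*t) := by
  have hx : x = 1 - s^2 := by linarith
  subst hx
  nlinarith [sq_nonneg (2 - s - 2*t), mul_nonneg (mul_nonneg hs0 hs0) (sub_nonneg.2 hs1),
    mul_nonneg (sub_nonneg.2 hs1) (sq_nonneg (2 - s - 2*t)), sq_nonneg s, sq_nonneg (1-s),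
    mul_nonneg hs0 (sq_nonneg (2 - s - 2*t))]

lemma hyp_nonneg {a c x : ℝ} (ha : 0 < a) (hc : 0 < c) (hx : 0 ≤ x) :
    0 ≤ hyp a a c x := by
  apply tsum_nonneg
  intro k
  have h1 := poch_pos ha k
  have h2 := poch_pos hc k
  have h3 : (0:ℝ) < Nat.factorial k := by exact_mod_cast Nat.factorial_pos k
  positivity

set_option maxHeartbeats 1600000 in
lemma hyp_le {n : ℕ} (hn : 1 ≤ n) {x : ℝ} (hx0 : 0 < x) (hx1 : x < 1)
    {a' : ℝ} (ha0 : 0 < a') (ha1 : a' ≤ 1) :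
    hyp ((n:ℝ) + 1/2) ((n:ℝ) + 1/2) (2*(n:ℝ) + 1) x
      ≤ (CaI a' / Bfn n) * ((1 - Real.sqrt (1-x))^n / x^n) * Real.sqrt (1-x) ^ (-a') := by
  have hnR : (1:ℝ) ≤ (n:ℝ) := by exact_mod_cast hn
  set s : ℝ := Real.sqrt (1-x) with hs
  have hs0 : 0 < s := Real.sqrt_pos.2 (by linarith)
  have hs1 : s ≤ 1 := Real.sqrt_le_one.mpr (by linarith)
  have hssq : s^2 = 1 - x := Real.sq_sqrt (by linarith)
  set p : ℝ := (n:ℝ) - 1/2 with hpdef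
  have hp : (1:ℝ)/2 ≤ p := by rw [hpdef]; linarith
  have hp0 : 0 < p := lt_of_lt_of_le (by norm_num) hp
  have hν : p + 1 = (n:ℝ) + 1/2 := by rw [hpdef]; ring
  have hν0 : (0:ℝ) < (n:ℝ) + 1/2 := by linarith
  have hμ : 2*p + 2 = 2*(n:ℝ) + 1 := by rw [hpdef]; ring
  have hμ0 : (0:ℝ) < 2*(n:ℝ) + 1 := by linarith
  have hJ0 : 0 < Bfn n := Bfn_pos hn
  have hBfn : Bfn n = Jin p 0 := rfl
  set M : ℝ := (1 - s)^n / x^n * s ^ (-a') with hM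
  have hM0 : 0 ≤ M := by
    apply mul_nonneg (div_nonneg (pow_nonneg (by linarith) n) (pow_nonneg hx0.le n))
    exact Real.rpow_nonneg hs0.le _
  have key : hyp ((n:ℝ) + 1/2) ((n:ℝ) + 1/2) (2*(n:ℝ) + 1) x ≤ (1 / Bfn n) * (M * CaI a') := by
    apply Real.tsum_le_of_sum_range_le
    · intro k
      have h1 := poch_pos hν0 k
      have h2 := poch_pos hμ0 k
      have h3 : (0:ℝ) < Nat.factorial k := by exact_mod_cast Nat.factorial_pos k
      positivity
    · intro N
      have hterm : ∀ k : ℕ,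
          ((ascPochhammer ℝ k).eval ((n:ℝ) + 1/2) * (ascPochhammer ℝ k).eval ((n:ℝ) + 1/2) /
            ((ascPochhammer ℝ k).eval (2*(n:ℝ) + 1) * (Nat.factorial k : ℝ))) * x ^ k
          = (1 / Bfn n) * (((ascPochhammer ℝ k).eval ((n:ℝ) + 1/2) * x ^ k / (Nat.factorial k : ℝ))
              * Jin p k) := by
        intro k
        have hf := Jin_formula hp k
        rw [hν, hμ, ← hBfn] at hf
        have he2 : (ascPochhammer ℝ k).eval (2*(n:ℝ) + 1) ≠ 0 := (poch_pos hμ0 k).ne'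
        have hJk : Jin p k = Bfn n * (ascPochhammer ℝ k).eval ((n:ℝ) + 1/2)
            / (ascPochhammer ℝ k).eval (2*(n:ℝ) + 1) := by
          rw [eq_div_iff he2]
          linarith [hf]
        rw [hJk]
        have h3 : (Nat.factorial k : ℝ) ≠ 0 := by positivity
        field_simp
      rw [Finset.sum_congr rfl (fun k _ => hterm k), ← Finset.mul_sum]
      have hswap : ∑ k ∈ Finset.range N,
          (((ascPochhammer ℝ k).eval ((n:ℝ) + 1/2) * x ^ k / (Nat.factorial k : ℝ)) * Jin p k)
          = ∫ t in (0:ℝ)..1, ∑ k ∈ Finset.range N,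
              ((ascPochhammer ℝ k).eval ((n:ℝ) + 1/2) * x ^ k / (Nat.factorial k : ℝ))
                * (t ^ (p + (k:ℝ)) * (1 - t) ^ p) := by
        rw [intervalIntegral.integral_finset_sum]
        · refine Finset.sum_congr rfl fun k _ => ?_
          rw [intervalIntegral.integral_const_mul]
          rfl
        · intro k _
          exact (continuous_const.mul (Jin_integrand_cont hp0 k)).intervalIntegrable 0 1
      rw [hswap]
      have hmono : (∫ t in (0:ℝ)..1, ∑ k ∈ Finset.range N,
            ((ascPochhammer ℝ k).eval ((n:ℝ) + 1/2) * x ^ k / (Nat.factorial k : ℝ))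
              * (t ^ (p + (k:ℝ)) * (1 - t) ^ p))
          ≤ ∫ t in (0:ℝ)..1, M * (t ^ (-(1:ℝ)/2) * (1-t) ^ (a'/2-1)) := by
        apply intervalIntegral.integral_mono_on (by norm_num)
        · apply Continuous.intervalIntegrable
          exact continuous_finset_sum _ fun k _ => continuous_const.mul (Jin_integrand_cont hp0 k)
        · exact (CaI_integrable ha0).const_mul M
        · intro t ht
          rcases eq_or_lt_of_le ht.1 with h0 | h0
          · rw [← h0]
            have hz : ∀ k : ℕ, (0:ℝ) ^ (p + (k:ℝ)) = 0 := fun k =>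
              Real.zero_rpow (by positivity)
            simp only [hz, zero_mul, mul_zero, Finset.sum_const_zero]
            have hz2 : (0:ℝ) ^ (-(1:ℝ)/2) = 0 := Real.zero_rpow (by norm_num)
            rw [hz2]
            simp
          · rcases eq_or_lt_of_le ht.2 with h1 | h1
            · rw [h1]
              simp only [sub_self, Real.zero_rpow hp0.ne', mul_zero, Finset.sum_const_zero,
                Real.zero_rpow (show a'/2 - 1 ≠ 0 by intro h; linarith)]
              simp
            · have ht0 : 0 < t := h0
              have ht1 : 0 < 1 - t := by linarith
              have hxt : x * t < 1 := by nlinarith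
              have hxt0 : 0 < 1 - x * t := by linarith
              have hxtnn : 0 ≤ x * t := by positivity
              have hsummand : ∀ k : ℕ,
                  ((ascPochhammer ℝ k).eval ((n:ℝ) + 1/2) * x ^ k / (Nat.factorial k : ℝ))
                    * (t ^ (p + (k:ℝ)) * (1 - t) ^ p)
                  = ((ascPochhammer ℝ k).eval ((n:ℝ) + 1/2) * (x*t) ^ k / (Nat.factorial k : ℝ))
                    * (t ^ p * (1 - t) ^ p) := by
                intro k
                rw [Real.rpow_add ht0, Real.rpow_natCast, mul_pow]
                ring
              rw [Finset.sum_congr rfl fun k _ => hsummand k, ← Finset.sum_mul]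
              have htay := taylor_bound N ((n:ℝ) + 1/2) (x*t) hν0 hxtnn hxt
              have htp : 0 ≤ t ^ p * (1 - t) ^ p :=
                mul_nonneg (Real.rpow_nonneg ht0.le _) (Real.rpow_nonneg ht1.le _)
              have step1 : (∑ k ∈ Finset.range N,
                  (ascPochhammer ℝ k).eval ((n:ℝ) + 1/2) * (x*t) ^ k / (Nat.factorial k : ℝ))
                    * (t ^ p * (1 - t) ^ p)
                  ≤ (1 - x*t) ^ (-((n:ℝ) + 1/2)) * (t ^ p * (1 - t) ^ p) :=
                mul_le_mul_of_nonneg_right htay htp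
              refine le_trans step1 ?_
              have hdect : t ^ p = t ^ n * t ^ (-(1:ℝ)/2) := by
                rw [← Real.rpow_natCast t n, ← Real.rpow_add ht0]
                congr 1
                rw [hpdef]; ring
              have hdec1t : (1-t) ^ p = (1-t) ^ n * (1-t) ^ (-(1:ℝ)/2) := by
                rw [← Real.rpow_natCast (1-t) n, ← Real.rpow_add ht1]
                congr 1
                rw [hpdef]; ring
              have hdecxt : (1 - x*t) ^ (-((n:ℝ) + 1/2))
                  = ((1 - x*t) ^ n)⁻¹ * (1 - x*t) ^ (-(1:ℝ)/2) := by
                rw [← Real.rpow_natCast (1-x*t) n, ← Real.rpow_neg hxt0.le,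
                  ← Real.rpow_add hxt0]
                congr 1
                ring
              rw [hdect, hdec1t, hdecxt]
              have hbase : t * (1-t) / (1 - x*t) ≤ (1 - s) / x := by
                rw [div_le_div_iff₀ hxt0 hx0]
                calc t * (1-t) * x = x * (t * (1-t)) := by ring
                  _ ≤ (1 - s) * (1 - x*t) := key_alg hx1.le ht0.le (by linarith) hs0.le hs1 hssq
              have hstepA : t ^ n * (1-t) ^ n * ((1 - x*t) ^ n)⁻¹ ≤ (1-s)^n / x^n := by
                have hbnn : 0 ≤ t * (1-t) / (1 - x*t) := by positivity
                have h := pow_le_pow_left₀ hbnn hbase n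
                rw [div_pow, div_pow] at h
                calc t ^ n * (1-t) ^ n * ((1 - x*t) ^ n)⁻¹
                    = (t * (1-t))^n / (1 - x*t)^n := by rw [mul_pow]; ring
                  _ ≤ (1-s)^n / x^n := h
              have hgm : (1-x) ^ a' * (1-t) ^ (1-a') ≤ 1 - x*t := by
                have g1 : (1-x) ^ a' ≤ (1 - x*t) ^ a' :=
                  Real.rpow_le_rpow (by linarith) (by nlinarith) ha0.le
                have g2 : (1-t) ^ (1-a') ≤ (1 - x*t) ^ (1-a') :=
                  Real.rpow_le_rpow ht1.le (by nlinarith) (by linarith)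
                calc (1-x) ^ a' * (1-t) ^ (1-a')
                    ≤ (1 - x*t) ^ a' * (1 - x*t) ^ (1-a') :=
                      mul_le_mul g1 g2 (Real.rpow_nonneg ht1.le _) (Real.rpow_nonneg hxt0.le _)
                  _ = 1 - x*t := by
                      rw [← Real.rpow_add hxt0]
                      norm_num
              have hgm0 : 0 < (1-x) ^ a' * (1-t) ^ (1-a') :=
                mul_pos (Real.rpow_pos_of_pos (by linarith) _) (Real.rpow_pos_of_pos ht1 _)
              have hstepB : (1 - x*t) ^ (-(1:ℝ)/2) ≤ s ^ (-a') * (1-t) ^ ((a'-1)/2) := by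
                have h := Real.rpow_le_rpow_of_nonpos hgm0 hgm (by norm_num : -(1:ℝ)/2 ≤ 0)
                refine le_trans h (le_of_eq ?_)
                rw [Real.mul_rpow (Real.rpow_nonneg (by linarith) _) (Real.rpow_nonneg ht1.le _),
                  ← Real.rpow_mul (by linarith : (0:ℝ) ≤ 1-x),
                  ← Real.rpow_mul ht1.le]
                congr 1
                · rw [hs, Real.sqrt_eq_rpow, ← Real.rpow_mul (by linarith : (0:ℝ) ≤ 1-x)]
                  congr 1
                  ring
                · congr 1
                  ring
              calc ((1 - x*t) ^ n)⁻¹ * (1 - x*t) ^ (-(1:ℝ)/2)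
                    * (t ^ n * t ^ (-(1:ℝ)/2) * ((1-t) ^ n * (1-t) ^ (-(1:ℝ)/2)))
                  = (t ^ n * (1-t) ^ n * ((1 - x*t) ^ n)⁻¹)
                    * (t ^ (-(1:ℝ)/2) * ((1-t) ^ (-(1:ℝ)/2) * (1 - x*t) ^ (-(1:ℝ)/2))) := by
                    ring
                _ ≤ ((1-s)^n / x^n)
                    * (t ^ (-(1:ℝ)/2) * ((1-t) ^ (-(1:ℝ)/2) * (s ^ (-a') * (1-t) ^ ((a'-1)/2)))) := by
                    apply mul_le_mul hstepA ?_ ?_ ?_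
                    · apply mul_le_mul_of_nonneg_left ?_ (Real.rpow_nonneg ht0.le _)
                      exact mul_le_mul_of_nonneg_left hstepB (Real.rpow_nonneg ht1.le _)
                    · have n1 := Real.rpow_nonneg ht0.le (-(1:ℝ)/2)
                      have n2 := Real.rpow_nonneg ht1.le (-(1:ℝ)/2)
                      have n3 := Real.rpow_nonneg hxt0.le (-(1:ℝ)/2)
                      positivity
                    · exact div_nonneg (pow_nonneg (by linarith) n) (pow_nonneg hx0.le n)
                _ = M * (t ^ (-(1:ℝ)/2) * (1-t) ^ (a'/2-1)) := by
                    rw [hM]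
                    have he : (1-t) ^ (-(1:ℝ)/2) * (1-t) ^ ((a'-1)/2) = (1-t) ^ (a'/2-1) := by
                      rw [← Real.rpow_add ht1]
                      congr 1
                      ring
                    rw [← he]
                    ring
      have hval : (∫ t in (0:ℝ)..1, M * (t ^ (-(1:ℝ)/2) * (1-t) ^ (a'/2-1))) = M * CaI a' := by
        rw [intervalIntegral.integral_const_mul]
        rfl
      rw [hval] at hmono
      exact mul_le_mul_of_nonneg_left hmono (by positivity)
  calc hyp ((n:ℝ) + 1/2) ((n:ℝ) + 1/2) (2*(n:ℝ) + 1) x ≤ (1 / Bfn n) * (M * CaI a') := key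
    _ = (CaI a' / Bfn n) * ((1 - s)^n / x^n) * s ^ (-a') := by rw [hM]; ring

lemma sin_half_sum_ge {φ ϕ : ℝ} (hφ : φ ∈ Set.Ioo 0 π) (hϕ : ϕ ∈ Set.Ioo 0 π) :
    Real.sin φ ≤ 2 * Real.sin ((φ + ϕ)/2) := by
  have hφ1 := hφ.1; have hφ2 := hφ.2; have hϕ1 := hϕ.1; have hϕ2 := hϕ.2
  have hpi := Real.pi_pos
  have hadd : (φ + ϕ)/2 = φ/2 + ϕ/2 := by ring
  rw [hadd, Real.sin_add]
  have hsφ : Real.sin φ = 2 * Real.sin (φ/2) * Real.cos (φ/2) := by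
    rw [show φ = 2 * (φ/2) by ring, Real.sin_two_mul]
    ring_nf
  have h1 : 0 ≤ Real.sin (φ/2) := Real.sin_nonneg_of_nonneg_of_le_pi (by linarith) (by linarith)
  have h2 : 0 ≤ Real.sin (ϕ/2) := Real.sin_nonneg_of_nonneg_of_le_pi (by linarith) (by linarith)
  have h3 : 0 ≤ Real.cos (φ/2) := Real.cos_nonneg_of_mem_Icc ⟨by linarith, by linarith⟩
  have h4 : 0 ≤ Real.cos (ϕ/2) := Real.cos_nonneg_of_mem_Icc ⟨by linarith, by linarith⟩
  rcases le_total ϕ φ with hle | hle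
  · have hc : Real.cos (φ/2) ≤ Real.cos (ϕ/2) :=
      Real.cos_le_cos_of_nonneg_of_le_pi (by linarith) (by linarith) (by linarith)
    nlinarith
  · have hsmono : Real.sin (φ/2) ≤ Real.sin (ϕ/2) := by
      apply Real.strictMonoOn_sin.monotoneOn ⟨by linarith, by linarith⟩ ⟨by linarith, by linarith⟩
      linarith
    nlinarith

lemma cos_diff_lb {φ ϕ : ℝ} (hφ : φ ∈ Set.Ioo 0 π) (hϕ : ϕ ∈ Set.Ioo 0 π) :
    Real.sqrt (Real.sin φ * Real.sin ϕ) * |φ - ϕ| / π ≤ |Real.cos φ - Real.cos ϕ| := by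
  have hφ1 := hφ.1; have hφ2 := hφ.2; have hϕ1 := hϕ.1; have hϕ2 := hϕ.2
  have hpi := Real.pi_pos
  have hmid : 0 ≤ Real.sin ((φ + ϕ)/2) :=
    Real.sin_nonneg_of_nonneg_of_le_pi (by linarith) (by linarith)
  have habs : |Real.cos φ - Real.cos ϕ| = 2 * Real.sin ((φ + ϕ)/2) * Real.sin (|φ - ϕ|/2) := by
    rw [Real.cos_sub_cos]
    rcases le_total ϕ φ with hle | hle
    · have hges : 0 ≤ Real.sin ((φ-ϕ)/2) :=
        Real.sin_nonneg_of_nonneg_of_le_pi (by linarith) (by linarith)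
      rw [abs_of_nonpos (by nlinarith), abs_of_nonneg (show (0:ℝ) ≤ φ - ϕ by linarith)]
      ring
    · rw [abs_of_nonneg, abs_of_nonpos (show φ - ϕ ≤ 0 by linarith)]
      · rw [show -(φ - ϕ)/2 = -((φ-ϕ)/2) by ring, Real.sin_neg]
        ring
      · have : Real.sin ((φ-ϕ)/2) ≤ 0 :=
          Real.sin_nonpos_of_nonpos_of_neg_pi_le (by linarith) (by linarith)
        nlinarith
  rw [habs]
  have hs1 : Real.sin φ ≤ 2 * Real.sin ((φ + ϕ)/2) := sin_half_sum_ge hφ hϕ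
  have hs2 : Real.sin ϕ ≤ 2 * Real.sin ((φ + ϕ)/2) := by
    have := sin_half_sum_ge hϕ hφ
    rw [show (ϕ + φ)/2 = (φ + ϕ)/2 by ring] at this
    exact this
  have hsφ : 0 < Real.sin φ := Real.sin_pos_of_pos_of_lt_pi hφ1 hφ2
  have hsϕ : 0 < Real.sin ϕ := Real.sin_pos_of_pos_of_lt_pi hϕ1 hϕ2
  have hsqrt : Real.sqrt (Real.sin φ * Real.sin ϕ) ≤ 2 * Real.sin ((φ + ϕ)/2) := by
    rw [show 2 * Real.sin ((φ + ϕ)/2) = Real.sqrt ((2 * Real.sin ((φ + ϕ)/2))^2) by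
      rw [Real.sqrt_sq (by linarith)]]
    apply Real.sqrt_le_sqrt
    nlinarith
  have hjordan : |φ - ϕ| / π ≤ Real.sin (|φ - ϕ|/2) := by
    have habs2 : |φ - ϕ| < π := by
      rw [abs_lt]; constructor <;> linarith
    have h0 : 0 ≤ |φ - ϕ|/2 := by positivity
    have := Real.mul_le_sin h0 (by linarith)
    calc |φ - ϕ| / π = 2/π * (|φ - ϕ|/2) := by field_simp
      _ ≤ Real.sin (|φ - ϕ|/2) := this
  have hsin2 : 0 ≤ Real.sin (|φ - ϕ|/2) := by
    apply Real.sin_nonneg_of_nonneg_of_le_pi (by positivity)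
    have : |φ - ϕ| < π := by rw [abs_lt]; constructor <;> linarith
    linarith
  calc Real.sqrt (Real.sin φ * Real.sin ϕ) * |φ - ϕ| / π
      = Real.sqrt (Real.sin φ * Real.sin ϕ) * (|φ - ϕ| / π) := by ring
    _ ≤ (2 * Real.sin ((φ + ϕ)/2)) * Real.sin (|φ - ϕ|/2) := by
        apply mul_le_mul hsqrt hjordan (by positivity) (by linarith)
    _ = 2 * Real.sin ((φ + ϕ)/2) * Real.sin (|φ - ϕ|/2) := by ring

set_option maxHeartbeats 2000000 in
/-- Assume `r0` satisfies (H2), i.e. `C0⁻¹ sin φ ≤ r0(φ) ≤ C0 sin φ` on `[0,π]`. Then for any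
`0 ≤ α < β ≤ 1` there is `C > 0` with
`|H_n(φ,ϕ)| ≤ C n^{−α} sin ϕ · r0(ϕ)^{1/2} r0(φ)^{−3/2} |φ−ϕ|^{−β}` for every `n ≥ 1` and all
`φ ≠ ϕ` in `(0,π)`. -/
theorem stmt8 (r0 : ℝ → ℝ) (C0 : ℝ) (hC0 : 0 < C0)
    (hH2 : ∀ φ ∈ Set.Icc (0:ℝ) π, C0⁻¹ * Real.sin φ ≤ r0 φ ∧ r0 φ ≤ C0 * Real.sin φ)
    (α β : ℝ) (hα : 0 ≤ α) (hαβ : α < β) (hβ : β ≤ 1) :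
    ∃ C > 0, ∀ n : ℕ, 1 ≤ n → ∀ φ ∈ Set.Ioo (0:ℝ) π, ∀ ϕ ∈ Set.Ioo (0:ℝ) π, φ ≠ ϕ →
      |Hker r0 n φ ϕ| ≤
        C * (n : ℝ) ^ (-α) * Real.sin ϕ * r0 ϕ ^ (1 / 2 : ℝ) * r0 φ ^ (-(3 / 2) : ℝ) *
          |φ - ϕ| ^ (-β) := by
  have hpi := Real.pi_pos
  set a' : ℝ := β - α with ha'def
  have ha'0 : 0 < a' := by rw [ha'def]; linarith
  have ha'1 : a' ≤ 1 := by rw [ha'def]; linarith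
  have hCa : 0 ≤ CaI a' := CaI_nonneg
  have hπC0 : 0 < π * C0 := by positivity
  have hpc : 0 < (π*C0) ^ β := Real.rpow_pos_of_pos hπC0 β
  have hpcneg : 0 < (π*C0) ^ (-β) := Real.rpow_pos_of_pos hπC0 (-β)
  set Cc : ℝ := CaI a' * (π*C0)^β + 1 with hCcdef
  have hCc0 : 0 < Cc := by
    have := mul_nonneg hCa hpc.le
    rw [hCcdef]; linarith
  refine ⟨Cc, hCc0, ?_⟩
  intro n hn φ hφ ϕ hϕ hne
  obtain ⟨m, rfl⟩ : ∃ m, n = m + 1 := ⟨n - 1, (Nat.succ_pred_eq_of_pos hn).symm⟩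
  have hφmem : φ ∈ Set.Icc (0:ℝ) π := ⟨hφ.1.le, hφ.2.le⟩
  have hϕmem : ϕ ∈ Set.Icc (0:ℝ) π := ⟨hϕ.1.le, hϕ.2.le⟩
  obtain ⟨hr0φl, hr0φu⟩ := hH2 φ hφmem
  obtain ⟨hr0ϕl, hr0ϕu⟩ := hH2 ϕ hϕmem
  have hsφ : 0 < Real.sin φ := Real.sin_pos_of_pos_of_lt_pi hφ.1 hφ.2
  have hsϕ : 0 < Real.sin ϕ := Real.sin_pos_of_pos_of_lt_pi hϕ.1 hϕ.2
  have hrφ : 0 < r0 φ := lt_of_lt_of_le (by positivity) hr0φl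
  have hrϕ : 0 < r0 ϕ := lt_of_lt_of_le (by positivity) hr0ϕl
  set Rv : ℝ := Rker r0 φ ϕ with hRvdef
  set D : ℝ := (r0 φ - r0 ϕ)^2 + (Real.cos φ - Real.cos ϕ)^2 with hDdef
  have hRD : Rv = 4 * (r0 φ * r0 ϕ) + D := by rw [hRvdef, Rker, hDdef]; ring
  have hcosne : Real.cos φ ≠ Real.cos ϕ := fun h => hne (Real.injOn_cos hφmem hϕmem h)
  have hD0 : 0 < D := by
    have h := sub_ne_zero.2 hcosne
    have h2 : 0 < (Real.cos φ - Real.cos ϕ)^2 :=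
      lt_of_le_of_ne (sq_nonneg _) (Ne.symm (pow_ne_zero 2 h))
    have h3 := sq_nonneg (r0 φ - r0 ϕ)
    rw [hDdef]
    linarith
  have htr : 0 < r0 φ * r0 ϕ := mul_pos hrφ hrϕ
  have hRv0 : 0 < Rv := by rw [hRD]; linarith
  set x : ℝ := 4 * r0 φ * r0 ϕ / Rv with hxdef
  have hx0 : 0 < x := by rw [hxdef]; positivity
  have hx1 : x < 1 := by
    rw [hxdef, div_lt_one hRv0, hRD]
    have he : 4 * r0 φ * r0 ϕ = 4 * (r0 φ * r0 ϕ) := by ring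
    linarith
  have h1x : 1 - x = D / Rv := by
    rw [hxdef]
    field_simp
    rw [hRD]
    ring
  set s : ℝ := Real.sqrt (1 - x) with hsdef
  have hs0 : 0 < s := Real.sqrt_pos.2 (by linarith)
  have hs1 : s ≤ 1 := Real.sqrt_le_one.mpr (by linarith)
  set cn : ℝ := (2:ℝ) ^ (2 * (m+1) - 1) * ((ascPochhammer ℝ (m+1)).eval (1 / 2 : ℝ)) ^ 2
    / (Nat.factorial (2 * (m+1)) : ℝ) with hcndef
  have hpoch0 : 0 < (ascPochhammer ℝ (m+1)).eval (1 / 2 : ℝ) := poch_pos (by norm_num) _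
  have hfact0 : (0:ℝ) < (Nat.factorial (2 * (m+1)) : ℝ) := by
    exact_mod_cast Nat.factorial_pos _
  have hcn0 : 0 < cn := by rw [hcndef]; positivity
  have hν0 : (0:ℝ) < ((m+1:ℕ):ℝ) + 1/2 := by positivity
  have hμ0 : (0:ℝ) < 2*((m+1:ℕ):ℝ) + 1 := by positivity
  have hhyp_nn : 0 ≤ hyp (((m+1:ℕ):ℝ) + 1/2) (((m+1:ℕ):ℝ) + 1/2) (2*((m+1:ℕ):ℝ) + 1) x :=
    hyp_nonneg hν0 hμ0 hx0.le
  have hRν : (0:ℝ) < Rv ^ (((m+1:ℕ):ℝ) + 1/2) := Real.rpow_pos_of_pos hRv0 _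
  have hH : Hker r0 (m+1) φ ϕ = cn *
      (Real.sin ϕ * r0 φ ^ m * r0 ϕ ^ (m+2) / Rv ^ (((m+1:ℕ):ℝ) + 1/2)) *
      hyp (((m+1:ℕ):ℝ) + 1/2) (((m+1:ℕ):ℝ) + 1/2) (2*((m+1:ℕ):ℝ) + 1) x := rfl
  have hpre_nn : 0 ≤ cn * (Real.sin ϕ * r0 φ ^ m * r0 ϕ ^ (m+2) / Rv ^ (((m+1:ℕ):ℝ) + 1/2)) := by
    apply mul_nonneg hcn0.le
    apply div_nonneg _ hRν.le
    positivity
  have hHpos : 0 ≤ Hker r0 (m+1) φ ϕ := by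
    rw [hH]
    exact mul_nonneg hpre_nn hhyp_nn
  have hm1 : 1 ≤ m + 1 := Nat.le_add_left 1 m
  have hB := Bfn_pos hm1
  -- step 1: apply hyp_le
  have hhyple := hyp_le hm1 hx0 hx1 ha'0 ha'1
  rw [← hsdef] at hhyple
  have hb1 : Hker r0 (m+1) φ ϕ ≤ cn *
      (Real.sin ϕ * r0 φ ^ m * r0 ϕ ^ (m+2) / Rv ^ (((m+1:ℕ):ℝ) + 1/2)) *
      ((CaI a' / Bfn (m+1)) * ((1 - s)^(m+1) / x^(m+1)) * s ^ (-a')) := by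
    rw [hH]
    exact mul_le_mul_of_nonneg_left hhyple hpre_nn
  -- identity
  have hRhalf : (0:ℝ) < Rv ^ ((1:ℝ)/2) := Real.rpow_pos_of_pos hRv0 _
  have hid : cn * (Real.sin ϕ * r0 φ ^ m * r0 ϕ ^ (m+2) / Rv ^ (((m+1:ℕ):ℝ) + 1/2)) *
      ((CaI a' / Bfn (m+1)) * ((1 - s)^(m+1) / x^(m+1)) * s ^ (-a'))
      = (cn / (4^(m+1) * Bfn (m+1))) *
        (CaI a' * Real.sin ϕ * (r0 ϕ / r0 φ) * (Rv ^ ((1:ℝ)/2))⁻¹ * (1 - s)^(m+1) * s ^ (-a')) := by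
    have hRsplit : Rv ^ (((m+1:ℕ):ℝ) + 1/2) = Rv^(m+1) * Rv ^ ((1:ℝ)/2) := by
      rw [Real.rpow_add hRv0, Real.rpow_natCast]
    have hxpow : x^(m+1) = (4 * r0 φ * r0 ϕ)^(m+1) / Rv^(m+1) := by
      rw [hxdef, div_pow]
    rw [hRsplit, hxpow]
    have h4 : (0:ℝ) < (4 * r0 φ * r0 ϕ)^(m+1) := by positivity
    have hRvm : (0:ℝ) < Rv^(m+1) := by positivity
    field_simp
    ring
  have hcoef : cn / (4^(m+1) * Bfn (m+1)) ≤ 1 := by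
    rw [div_le_one (by positivity)]
    have hc := coeff_le_Bfn (m+1) hm1
    rw [hcndef]
    rw [div_le_iff₀ (by positivity : (0:ℝ) < 4^(m+1))] at hc
    calc (2:ℝ) ^ (2 * (m+1) - 1) * ((ascPochhammer ℝ (m+1)).eval (1 / 2 : ℝ)) ^ 2
        / (Nat.factorial (2 * (m+1)) : ℝ) ≤ Bfn (m+1) * 4^(m+1) := hc
      _ = 4^(m+1) * Bfn (m+1) := by ring
  have hY_nn : 0 ≤ CaI a' * Real.sin ϕ * (r0 ϕ / r0 φ) * (Rv ^ ((1:ℝ)/2))⁻¹ *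
      (1 - s)^(m+1) * s ^ (-a') := by
    have h1 : (0:ℝ) ≤ (1-s)^(m+1) := pow_nonneg (by linarith) _
    have h2 : (0:ℝ) ≤ s ^ (-a') := Real.rpow_nonneg hs0.le _
    have h3 : (0:ℝ) ≤ r0 ϕ / r0 φ := by positivity
    have h4 : (0:ℝ) ≤ (Rv ^ ((1:ℝ)/2))⁻¹ := by positivity
    have h5 : (0:ℝ) ≤ CaI a' * Real.sin ϕ := mul_nonneg hCa hsϕ.le
    positivity
  have hb2 : Hker r0 (m+1) φ ϕ ≤ CaI a' * Real.sin ϕ * (r0 ϕ / r0 φ) *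
      (Rv ^ ((1:ℝ)/2))⁻¹ * (1 - s)^(m+1) * s ^ (-a') := by
    refine le_trans hb1 ?_
    rw [hid]
    nth_rewrite 2 [show CaI a' * Real.sin ϕ * (r0 ϕ / r0 φ) * (Rv ^ ((1:ℝ)/2))⁻¹ *
      (1 - s)^(m+1) * s ^ (-a') = 1 * (CaI a' * Real.sin ϕ * (r0 ϕ / r0 φ) * (Rv ^ ((1:ℝ)/2))⁻¹ *
      (1 - s)^(m+1) * s ^ (-a')) from (one_mul _).symm]
    exact mul_le_mul_of_nonneg_right hcoef hY_nn
  -- decay step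
  set nr : ℝ := ((m+1:ℕ):ℝ) with hnrdef
  have hnr1 : (1:ℝ) ≤ nr := by rw [hnrdef]; exact_mod_cast hm1
  have hnr0 : (0:ℝ) < nr := by linarith
  have hu0 : 0 < nr * s := mul_pos hnr0 hs0
  have hdecay : (1 - s)^(m+1) ≤ nr ^ (-α) * s ^ (-α) := by
    have e1 : (1-s)^(m+1) ≤ Real.exp (-s) ^ (m+1) :=
      pow_le_pow_left₀ (by linarith) (by linarith [Real.add_one_le_exp (-s)]) _
    have e2 : Real.exp (-s) ^ (m+1) = Real.exp (-(nr * s)) := by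
      rw [← Real.exp_nat_mul, hnrdef]
      congr 1
      push_cast
      ring
    have e3 : Real.exp (-(nr*s)) ≤ (nr*s) ^ (-α) := by
      rw [Real.exp_neg, Real.rpow_neg hu0.le]
      apply inv_anti₀ (Real.rpow_pos_of_pos hu0 _)
      rcases le_total (nr*s) 1 with h | h
      · calc (nr*s) ^ α ≤ 1 := Real.rpow_le_one hu0.le h hα
          _ ≤ Real.exp (nr*s) := by linarith [Real.add_one_le_exp (nr*s)]
      · calc (nr*s) ^ α ≤ (nr*s) ^ (1:ℝ) :=
            Real.rpow_le_rpow_of_exponent_le h (by linarith)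
          _ = nr*s := Real.rpow_one _
          _ ≤ Real.exp (nr*s) := by linarith [Real.add_one_le_exp (nr*s)]
    have e4 : (nr*s) ^ (-α) = nr ^ (-α) * s ^ (-α) := Real.mul_rpow hnr0.le hs0.le
    calc (1-s)^(m+1) ≤ Real.exp (-s) ^ (m+1) := e1
      _ = Real.exp (-(nr*s)) := e2
      _ ≤ (nr*s) ^ (-α) := e3
      _ = nr ^ (-α) * s ^ (-α) := e4
  have hsplit2 : s ^ (-α) * s ^ (-a') = s ^ (-β) := by
    rw [← Real.rpow_add hs0]
    congr 1
    rw [ha'def]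
    ring
  have hsβ : s ^ (-β) = D ^ (-(β/2)) * Rv ^ (β/2) := by
    rw [hsdef, h1x, Real.sqrt_eq_rpow, ← Real.rpow_mul (by positivity : (0:ℝ) ≤ D/Rv),
      show (1/(2:ℝ)) * (-β) = -(β/2) by ring,
      Real.div_rpow hD0.le hRv0.le, div_eq_mul_inv, ← Real.rpow_neg hRv0.le, neg_neg]
  -- distance bound
  have hΔpos : 0 < |φ - ϕ| := abs_pos.2 (sub_ne_zero.2 hne)
  have hcd := cos_diff_lb hφ hϕ
  have hcd2 : |Real.cos φ - Real.cos ϕ| ≤ Real.sqrt D := by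
    rw [show |Real.cos φ - Real.cos ϕ| = Real.sqrt ((Real.cos φ - Real.cos ϕ)^2) from
      (Real.sqrt_sq_eq_abs _).symm]
    apply Real.sqrt_le_sqrt
    have h3 := sq_nonneg (r0 φ - r0 ϕ)
    rw [hDdef]
    linarith
  have htr_sin : Real.sqrt (r0 φ * r0 ϕ) ≤ C0 * Real.sqrt (Real.sin φ * Real.sin ϕ) := by
    rw [show C0 * Real.sqrt (Real.sin φ * Real.sin ϕ)
        = Real.sqrt (C0^2 * (Real.sin φ * Real.sin ϕ)) by
      rw [Real.sqrt_mul (sq_nonneg C0), Real.sqrt_sq hC0.le]]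
    apply Real.sqrt_le_sqrt
    calc r0 φ * r0 ϕ ≤ (C0 * Real.sin φ) * (C0 * Real.sin ϕ) :=
          mul_le_mul hr0φu hr0ϕu hrϕ.le (by positivity)
      _ = C0^2 * (Real.sin φ * Real.sin ϕ) := by ring
  have hss' : 0 < Real.sqrt (Real.sin φ * Real.sin ϕ) := Real.sqrt_pos.2 (by positivity)
  have htr' : 0 < Real.sqrt (r0 φ * r0 ϕ) := Real.sqrt_pos.2 htr
  have hsD : 0 < Real.sqrt D := Real.sqrt_pos.2 hD0
  have hK : |φ - ϕ| ≤ π * C0 * Real.sqrt D / Real.sqrt (r0 φ * r0 ϕ) := by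
    rw [le_div_iff₀ htr']
    calc |φ - ϕ| * Real.sqrt (r0 φ * r0 ϕ)
        ≤ |φ - ϕ| * (C0 * Real.sqrt (Real.sin φ * Real.sin ϕ)) :=
          mul_le_mul_of_nonneg_left htr_sin (abs_nonneg _)
      _ = π * C0 * (Real.sqrt (Real.sin φ * Real.sin ϕ) * |φ - ϕ| / π) := by
          field_simp
      _ ≤ π * C0 * |Real.cos φ - Real.cos ϕ| :=
          mul_le_mul_of_nonneg_left hcd (by positivity)
      _ ≤ π * C0 * Real.sqrt D := mul_le_mul_of_nonneg_left hcd2 (by positivity)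
  have hKb : (π * C0 * Real.sqrt D / Real.sqrt (r0 φ * r0 ϕ)) ^ (-β) ≤ |φ - ϕ| ^ (-β) :=
    Real.rpow_le_rpow_of_nonpos hΔpos hK (by linarith)
  have hKval : (π * C0 * Real.sqrt D / Real.sqrt (r0 φ * r0 ϕ)) ^ (-β)
      = (π*C0) ^ (-β) * (D ^ (-(β/2)) * (r0 φ * r0 ϕ) ^ (β/2)) := by
    rw [show π * C0 * Real.sqrt D / Real.sqrt (r0 φ * r0 ϕ)
        = (π * C0) * (Real.sqrt D / Real.sqrt (r0 φ * r0 ϕ)) by ring]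
    rw [Real.mul_rpow hπC0.le (by positivity)]
    congr 1
    rw [Real.div_rpow hsD.le htr'.le]
    rw [Real.sqrt_eq_rpow, Real.sqrt_eq_rpow,
      ← Real.rpow_mul hD0.le, ← Real.rpow_mul htr.le,
      show (1/(2:ℝ)) * (-β) = -(β/2) by ring]
    rw [div_eq_mul_inv, ← Real.rpow_neg htr.le, neg_neg]
  -- core inequality
  have hrpow_eq : r0 ϕ ^ ((1:ℝ)/2) * r0 φ ^ (-(3/2):ℝ) * (r0 φ * r0 ϕ) ^ (β/2)
      = (r0 ϕ / r0 φ) * (r0 φ * r0 ϕ) ^ ((β-1)/2) := by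
    rw [Real.mul_rpow hrφ.le hrϕ.le, Real.mul_rpow hrφ.le hrϕ.le]
    have hϕe : r0 ϕ ^ ((1:ℝ)/2) * r0 ϕ ^ (β/2) = r0 ϕ * r0 ϕ ^ ((β-1)/2) := by
      rw [← Real.rpow_add hrϕ]
      nth_rewrite 2 [show r0 ϕ = r0 ϕ ^ (1:ℝ) from (Real.rpow_one _).symm]
      rw [← Real.rpow_add hrϕ]
      congr 1
      ring
    have hφe : r0 φ ^ (-(3/2):ℝ) * r0 φ ^ (β/2) = (r0 φ)⁻¹ * r0 φ ^ ((β-1)/2) := by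
      rw [← Real.rpow_add hrφ]
      rw [show (r0 φ)⁻¹ = r0 φ ^ (-1:ℝ) from (Real.rpow_neg_one _).symm, ← Real.rpow_add hrφ]
      congr 1
      ring
    calc r0 ϕ ^ ((1:ℝ)/2) * r0 φ ^ (-(3/2):ℝ) * (r0 φ ^ (β/2) * r0 ϕ ^ (β/2))
        = (r0 ϕ ^ ((1:ℝ)/2) * r0 ϕ ^ (β/2)) * (r0 φ ^ (-(3/2):ℝ) * r0 φ ^ (β/2)) := by ring
      _ = (r0 ϕ * r0 ϕ ^ ((β-1)/2)) * ((r0 φ)⁻¹ * r0 φ ^ ((β-1)/2)) := by rw [hϕe, hφe]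
      _ = (r0 ϕ / r0 φ) * (r0 φ ^ ((β-1)/2) * r0 ϕ ^ ((β-1)/2)) := by
          rw [div_eq_mul_inv]
          ring
  have hRvhalf_eq : (Rv ^ ((1:ℝ)/2))⁻¹ * Rv ^ (β/2) = Rv ^ ((β-1)/2) := by
    rw [show (Rv ^ ((1:ℝ)/2))⁻¹ = Rv ^ (-(1:ℝ)/2) by
      rw [show -(1:ℝ)/2 = -((1:ℝ)/2) by ring, Real.rpow_neg hRv0.le]]
    rw [← Real.rpow_add hRv0]
    congr 1
    ring
  have htrRv : r0 φ * r0 ϕ ≤ Rv := by rw [hRD]; linarith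
  have hRvtr : Rv ^ ((β-1)/2) ≤ (r0 φ * r0 ϕ) ^ ((β-1)/2) :=
    Real.rpow_le_rpow_of_nonpos htr htrRv (by linarith)
  have hCaC : CaI a' ≤ Cc * (π*C0) ^ (-β) := by
    rw [Real.rpow_neg hπC0.le, hCcdef, ← div_eq_mul_inv, le_div_iff₀ hpc]
    linarith
  have hcore : CaI a' * (r0 ϕ / r0 φ) * ((Rv ^ ((1:ℝ)/2))⁻¹ * Rv ^ (β/2))
      ≤ Cc * r0 ϕ ^ ((1:ℝ)/2) * r0 φ ^ (-(3/2):ℝ) * ((π*C0) ^ (-β) * (r0 φ * r0 ϕ) ^ (β/2)) := by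
    rw [hRvhalf_eq]
    have hrhs : Cc * r0 ϕ ^ ((1:ℝ)/2) * r0 φ ^ (-(3/2):ℝ) * ((π*C0) ^ (-β) * (r0 φ * r0 ϕ) ^ (β/2))
        = (Cc * (π*C0) ^ (-β)) * ((r0 ϕ / r0 φ) * (r0 φ * r0 ϕ) ^ ((β-1)/2)) := by
      rw [← hrpow_eq]
      ring
    rw [hrhs]
    calc CaI a' * (r0 ϕ / r0 φ) * Rv ^ ((β-1)/2)
        ≤ CaI a' * (r0 ϕ / r0 φ) * (r0 φ * r0 ϕ) ^ ((β-1)/2) := by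
          apply mul_le_mul_of_nonneg_left hRvtr
          positivity
      _ ≤ (Cc * (π*C0) ^ (-β)) * ((r0 ϕ / r0 φ) * (r0 φ * r0 ϕ) ^ ((β-1)/2)) := by
          rw [show CaI a' * (r0 ϕ / r0 φ) * (r0 φ * r0 ϕ) ^ ((β-1)/2)
            = CaI a' * ((r0 ϕ / r0 φ) * (r0 φ * r0 ϕ) ^ ((β-1)/2)) by ring]
          apply mul_le_mul_of_nonneg_right hCaC
          positivity
  -- final assembly
  have habs : |Hker r0 (m+1) φ ϕ| = Hker r0 (m+1) φ ϕ := abs_of_nonneg hHpos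
  rw [habs]
  calc Hker r0 (m+1) φ ϕ
      ≤ CaI a' * Real.sin ϕ * (r0 ϕ / r0 φ) * (Rv ^ ((1:ℝ)/2))⁻¹ * (1 - s)^(m+1) * s ^ (-a') := hb2
    _ ≤ CaI a' * Real.sin ϕ * (r0 ϕ / r0 φ) * (Rv ^ ((1:ℝ)/2))⁻¹ * (nr ^ (-α) * s ^ (-α)) * s ^ (-a') := by
        apply mul_le_mul_of_nonneg_right _ (Real.rpow_nonneg hs0.le _)
        apply mul_le_mul_of_nonneg_left hdecay
        have h5 : (0:ℝ) ≤ CaI a' * Real.sin ϕ := mul_nonneg hCa hsϕ.le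
        positivity
    _ = nr ^ (-α) * ((Real.sin ϕ * D ^ (-(β/2))) *
          (CaI a' * (r0 ϕ / r0 φ) * ((Rv ^ ((1:ℝ)/2))⁻¹ * Rv ^ (β/2)))) := by
        rw [show CaI a' * Real.sin ϕ * (r0 ϕ / r0 φ) * (Rv ^ ((1:ℝ)/2))⁻¹ *
            (nr ^ (-α) * s ^ (-α)) * s ^ (-a')
          = nr ^ (-α) * (CaI a' * Real.sin ϕ * (r0 ϕ / r0 φ) * (Rv ^ ((1:ℝ)/2))⁻¹) *
            (s ^ (-α) * s ^ (-a')) by ring, hsplit2, hsβ]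
        ring
    _ ≤ nr ^ (-α) * ((Real.sin ϕ * D ^ (-(β/2))) *
          (Cc * r0 ϕ ^ ((1:ℝ)/2) * r0 φ ^ (-(3/2):ℝ) * ((π*C0) ^ (-β) * (r0 φ * r0 ϕ) ^ (β/2)))) := by
        apply mul_le_mul_of_nonneg_left _ (Real.rpow_nonneg hnr0.le _)
        apply mul_le_mul_of_nonneg_left hcore
        have := Real.rpow_nonneg hD0.le (-(β/2))
        positivity
    _ = nr ^ (-α) * ((Real.sin ϕ * (Cc * r0 ϕ ^ ((1:ℝ)/2) * r0 φ ^ (-(3/2):ℝ))) *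
          ((π*C0) ^ (-β) * (D ^ (-(β/2)) * (r0 φ * r0 ϕ) ^ (β/2)))) := by ring
    _ ≤ nr ^ (-α) * ((Real.sin ϕ * (Cc * r0 ϕ ^ ((1:ℝ)/2) * r0 φ ^ (-(3/2):ℝ))) *
          |φ - ϕ| ^ (-β)) := by
        apply mul_le_mul_of_nonneg_left _ (Real.rpow_nonneg hnr0.le _)
        apply mul_le_mul_of_nonneg_left _ ?_
        · rw [← hKval]
          exact hKb
        · have h1 : (0:ℝ) ≤ r0 ϕ ^ ((1:ℝ)/2) := Real.rpow_nonneg hrϕ.le _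
          have h2 : (0:ℝ) ≤ r0 φ ^ (-(3/2):ℝ) := Real.rpow_nonneg hrφ.le _
          positivity
    _ = Cc * nr ^ (-α) * Real.sin ϕ * r0 ϕ ^ ((1:ℝ)/2) * r0 φ ^ (-(3/2):ℝ) * |φ - ϕ| ^ (-β) := by
        ring
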